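/- Let c = (c₁,…,c_k) be a composition of a positive integer ℓ into k ≥ 2 nonnegative parts, let I_c = { i ∈ {1,…,k} : c_i > 0 }, and for ∅ ⊊ J ⊆ I_c define the composition c(J) = (c₁(J),…,c_k(J)) by c_i(J) = c_i − 1 if i ∈ J and i−1 ∉ J, c_i(J) = c_i + 1 if i ∉ J and i−1 ∈ J, and c_i(J) = c_i otherwise, where indices are read with c₀ = c_k (i.e., i−1 ∈ J means i = 1 and k ∈ J, when i = 1). Then, as an identity of formal power series in y and q, F_c(y,q) = Σ_{∅⊊J⊆I_c} (−1)^{|J|−1} F_{c(J)}(y q^{|J|}, q)/(1 − y q^{|J|}). -/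

import Mathlib

/-
Two-variable formal power series setting: `y = X 0` and `q = X 1` are the two
variables of `MvPowerSeries (Fin 2) ℚ`, with the product (coefficient-wise)
topology used for infinite sums/products.
-/

noncomputable section

open MvPowerSeries

instance : TopologicalSpace (MvPowerSeries (Fin 2) ℚ) :=
  inferInstanceAs (TopologicalSpace ((Fin 2 →₀ ℕ) → ℚ))

/-- A cylindric partition of profile `c = (c 0, …, c (k-1))`: a `k`-tuple of
integer partitions (weakly decreasing, finitely supported sequences of
nonnegative integers), where `part i j` is the `(j+1)`-st part of the
`(i+1)`-st partition, satisfying the cyclic inequalities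
`λ^{(i)}_j ≥ λ^{(i+1)}_{j + c_{i+1}}` for `1 ≤ i ≤ k-1` and
`λ^{(k)}_j ≥ λ^{(1)}_{j + c_1}` (i.e. indices taken mod `k`). -/
structure CylindricPartition (k : ℕ) [NeZero k] (c : Fin k → ℕ) where
  part : Fin k → ℕ → ℕ
  antitone : ∀ i, Antitone (part i)
  finite_support : ∀ i, ∃ N, ∀ j, N ≤ j → part i j = 0
  cyl : ∀ (i : Fin k) (j : ℕ), part (i + 1) (j + c (i + 1)) ≤ part i j

/-- The size `|Λ|` of a cylindric partition: the sum of all its parts. -/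
def CylindricPartition.size {k : ℕ} [NeZero k] {c : Fin k → ℕ}
    (Λ : CylindricPartition k c) : ℕ :=
  ∑ᶠ (i : Fin k) (j : ℕ), Λ.part i j

/-- The largest entry `max(Λ) = max(λ^{(1)}_1, …, λ^{(k)}_1)`. -/
def CylindricPartition.max {k : ℕ} [NeZero k] {c : Fin k → ℕ}
    (Λ : CylindricPartition k c) : ℕ :=
  Finset.univ.sup fun i => Λ.part i 0

/-- The two-variable generating function `F_c(y,q) = Σ_Λ y^{max Λ} q^{|Λ|}`
over all cylindric partitions `Λ` of profile `c`, evaluated at arbitrary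
power series arguments `y` and `q`. -/
def cylGF₂ (k : ℕ) [NeZero k] (c : Fin k → ℕ) (y q : MvPowerSeries (Fin 2) ℚ) :
    MvPowerSeries (Fin 2) ℚ :=
  ∑' Λ : CylindricPartition k c, y ^ Λ.max * q ^ Λ.size

/-- The modified profile `c(J)`, where the predecessor `i - 1` is taken
cyclically in `Fin k` (so `c₀ = c_k`). -/
def profileMod (k : ℕ) [NeZero k] (c : Fin k → ℕ) (J : Finset (Fin k)) : Fin k → ℕ :=
  fun i =>
    if i ∈ J ∧ i - 1 ∉ J then c i - 1
    else if i ∉ J ∧ i - 1 ∈ J then c i + 1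
    else c i

/-! ### Auxiliary material -/

section Topology

/-- Summability in the product topology follows from coefficient-wise summability. -/
theorem CW.summable_of_coeff {ι : Type*} (f : ι → MvPowerSeries (Fin 2) ℚ)
    (h : ∀ e, Summable fun i => coeff e (f i)) : Summable f :=
  Pi.summable.mpr h

theorem CW.coeff_tsum {ι : Type*} (f : ι → MvPowerSeries (Fin 2) ℚ) (hf : Summable f)
    (e : Fin 2 →₀ ℕ) : coeff e (∑' i, f i) = ∑' i, coeff e (f i) :=
  tsum_apply hf

theorem CW.summable_monomial {ι : Type*} (E : ι → (Fin 2 →₀ ℕ))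
    (h : ∀ e, {s | E s = e}.Finite) :
    Summable fun s => (monomial (E s) 1 : MvPowerSeries (Fin 2) ℚ) := by
  apply CW.summable_of_coeff
  intro e
  apply summable_of_ne_finset_zero (s := (h e).toFinset)
  intro s hs
  simp only [Set.Finite.mem_toFinset, Set.mem_setOf_eq] at hs
  simp [coeff_monomial, Ne.symm hs]

theorem CW.coeff_tsum_monomial {ι : Type*} (E : ι → (Fin 2 →₀ ℕ))
    (h : ∀ e, {s | E s = e}.Finite) (e : Fin 2 →₀ ℕ) :
    coeff e (∑' s, (monomial (E s) 1 : MvPowerSeries (Fin 2) ℚ))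
      = Nat.card {s // E s = e} := by
  rw [CW.coeff_tsum _ (CW.summable_monomial E h)]
  rw [tsum_eq_sum (s := (h e).toFinset) (by
    intro s hs
    simp only [Set.Finite.mem_toFinset, Set.mem_setOf_eq] at hs
    simp [coeff_monomial, Ne.symm hs])]
  rw [show Nat.card {s // E s = e} = (h e).toFinset.card from
    Nat.card_eq_card_finite_toFinset (h e)]
  rw [Finset.sum_congr rfl (fun s hs => ?_), Finset.sum_const, nsmul_eq_mul, mul_one]
  simp only [Set.Finite.mem_toFinset, Set.mem_setOf_eq] at hs
  simp [coeff_monomial, hs]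

end Topology

section MkExp

/-- The exponent `y^a q^n` as a `Finsupp` on `Fin 2`. -/
def CW.mkExp (a n : ℕ) : Fin 2 →₀ ℕ := Finsupp.single 0 a + Finsupp.single 1 n

theorem CW.mkExp_apply0 (a n : ℕ) : CW.mkExp a n 0 = a := by
  rw [CW.mkExp, Finsupp.add_apply, Finsupp.single_eq_same,
    Finsupp.single_eq_of_ne (by decide), add_zero]

theorem CW.mkExp_apply1 (a n : ℕ) : CW.mkExp a n 1 = n := by
  rw [CW.mkExp, Finsupp.add_apply, Finsupp.single_eq_same,
    Finsupp.single_eq_of_ne (by decide), zero_add]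

theorem CW.mkExp_eq_iff (a n : ℕ) (e : Fin 2 →₀ ℕ) :
    CW.mkExp a n = e ↔ a = e 0 ∧ n = e 1 := by
  constructor
  · rintro rfl
    exact ⟨(CW.mkExp_apply0 a n).symm, (CW.mkExp_apply1 a n).symm⟩
  · rintro ⟨rfl, rfl⟩
    ext x
    fin_cases x
    · exact CW.mkExp_apply0 _ _
    · exact CW.mkExp_apply1 _ _

theorem CW.mkExp_add (a n a' n' : ℕ) :
    CW.mkExp a n + CW.mkExp a' n' = CW.mkExp (a + a') (n + n') := by
  simp only [CW.mkExp, Finsupp.single_add]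
  abel

theorem CW.mkExp_ne_zero (m : ℕ) : CW.mkExp 1 m ≠ 0 := by
  intro h
  have := DFunLike.congr_fun h (0 : Fin 2)
  rw [CW.mkExp_apply0] at this
  simp at this

theorem CW.X_pow_mul_pow (M n : ℕ) :
    (X 0 : MvPowerSeries (Fin 2) ℚ) ^ M * X 1 ^ n = monomial (CW.mkExp M n) 1 := by
  rw [X_pow_eq, X_pow_eq, monomial_mul_monomial, one_mul, CW.mkExp]

theorem CW.X_mul_pow_eq (m M n : ℕ) :
    ((X 0 * X 1 ^ m : MvPowerSeries (Fin 2) ℚ)) ^ M * X 1 ^ n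
      = monomial (CW.mkExp M (m * M + n)) 1 := by
  rw [mul_pow, ← pow_mul, mul_assoc, ← pow_add, CW.X_pow_mul_pow]

end MkExp

namespace CylindricPartition

variable {k : ℕ} [NeZero k] {c : Fin k → ℕ}

theorem ext' {Λ₁ Λ₂ : CylindricPartition k c} (h : Λ₁.part = Λ₂.part) : Λ₁ = Λ₂ := by
  cases Λ₁; cases Λ₂; cases h; rfl

theorem exists_bound (Λ : CylindricPartition k c) : ∃ N, ∀ i j, N ≤ j → Λ.part i j = 0 := by
  choose N hN using Λ.finite_support
  exact ⟨Finset.univ.sup N, fun i j hj =>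
    hN i j (le_trans (Finset.le_sup (Finset.mem_univ i)) hj)⟩

theorem finsum_eq_range_sum (f : ℕ → ℕ) {N : ℕ} (h : ∀ j, N ≤ j → f j = 0) {M : ℕ}
    (hM : N ≤ M) : ∑ᶠ j, f j = ∑ j ∈ Finset.range M, f j := by
  apply finsum_eq_sum_of_support_subset
  intro j hj
  simp only [Function.mem_support] at hj
  simp only [Finset.coe_range, Set.mem_Iio]
  by_contra hc
  exact hj (h j (by omega))

theorem size_eq_sum (Λ : CylindricPartition k c) {N : ℕ}
    (hN : ∀ i j, N ≤ j → Λ.part i j = 0) {M : ℕ} (hM : N ≤ M) :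
    Λ.size = ∑ i, ∑ j ∈ Finset.range M, Λ.part i j := by
  rw [size, finsum_eq_sum_of_fintype]
  exact Finset.sum_congr rfl fun i _ => finsum_eq_range_sum _ (hN i) hM

theorem part_le_size (Λ : CylindricPartition k c) (i : Fin k) (j : ℕ) :
    Λ.part i j ≤ Λ.size := by
  obtain ⟨N, hN⟩ := Λ.exists_bound
  rw [Λ.size_eq_sum hN (show N ≤ N + j + 1 by omega)]
  calc Λ.part i j ≤ ∑ j' ∈ Finset.range (N + j + 1), Λ.part i j' :=
        Finset.single_le_sum (fun _ _ => Nat.zero_le _)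
          (Finset.mem_range.mpr (by omega))
    _ ≤ _ := Finset.single_le_sum (f := fun i => ∑ j' ∈ Finset.range _, Λ.part i j')
          (fun _ _ => Nat.zero_le _) (Finset.mem_univ i)

theorem lt_size_of_part_ne_zero (Λ : CylindricPartition k c) {i : Fin k} {j : ℕ}
    (h : Λ.part i j ≠ 0) : j < Λ.size := by
  obtain ⟨N, hN⟩ := Λ.exists_bound
  rw [Λ.size_eq_sum hN (show N ≤ N + j + 1 by omega)]
  have h1 : j + 1 ≤ ∑ j' ∈ Finset.range (j + 1), Λ.part i j' := by
    calc j + 1 = ∑ _j' ∈ Finset.range (j + 1), 1 := by simp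
      _ ≤ _ := Finset.sum_le_sum fun j' hj' => by
          have hj'' := Finset.mem_range.mp hj'
          have := Λ.antitone i (show j' ≤ j by omega)
          omega
  have h2 : ∑ j' ∈ Finset.range (j + 1), Λ.part i j'
      ≤ ∑ j' ∈ Finset.range (N + j + 1), Λ.part i j' :=
    Finset.sum_le_sum_of_subset (Finset.range_subset_range.mpr (by omega))
  have h3 : ∑ j' ∈ Finset.range (N + j + 1), Λ.part i j'
      ≤ ∑ i', ∑ j' ∈ Finset.range (N + j + 1), Λ.part i' j' :=
    Finset.single_le_sum (f := fun i' => ∑ j' ∈ Finset.range _, Λ.part i' j')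
      (fun _ _ => Nat.zero_le _) (Finset.mem_univ i)
  omega

theorem finite_size_le (n : ℕ) : {Λ : CylindricPartition k c | Λ.size ≤ n}.Finite := by
  have : Finite {Λ : CylindricPartition k c // Λ.size ≤ n} := by
    apply Finite.of_injective (β := Fin k → Fin (n + 1) → Fin (n + 1))
      (fun Λ i j => ⟨Λ.1.part i j, by
        have := Λ.1.part_le_size i j
        have := Λ.2
        omega⟩)
    intro Λ₁ Λ₂ h
    apply Subtype.ext
    apply ext'
    funext i j
    by_cases hj : j < n + 1
    · have := congrFun (congrFun h i) ⟨j, hj⟩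
      simpa [Fin.ext_iff] using this
    · have z1 : Λ₁.1.part i j = 0 := by
        by_contra hz
        have := Λ₁.1.lt_size_of_part_ne_zero hz
        have := Λ₁.2
        omega
      have z2 : Λ₂.1.part i j = 0 := by
        by_contra hz
        have := Λ₂.1.lt_size_of_part_ne_zero hz
        have := Λ₂.2
        omega
      rw [z1, z2]
  exact Set.finite_coe_iff.mp this

theorem max_le_iff {Λ : CylindricPartition k c} {a : ℕ} :
    Λ.max ≤ a ↔ ∀ i, Λ.part i 0 ≤ a := by
  rw [max, Finset.sup_le_iff]
  exact ⟨fun h i => h i (Finset.mem_univ i), fun h i _ => h i⟩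

theorem part_le_max (Λ : CylindricPartition k c) (i : Fin k) : Λ.part i 0 ≤ Λ.max := by
  rw [CylindricPartition.max]
  exact Finset.le_sup (f := fun i => Λ.part i 0) (Finset.mem_univ i)

theorem exists_part_eq_max (Λ : CylindricPartition k c) : ∃ i, Λ.part i 0 = Λ.max := by
  haveI : Nonempty (Fin k) := ⟨⟨0, Nat.pos_of_ne_zero (NeZero.ne k)⟩⟩
  obtain ⟨i, _, hi⟩ := Finset.exists_mem_eq_sup Finset.univ Finset.univ_nonempty
    (fun i => Λ.part i 0)
  exact ⟨i, hi.symm⟩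

end CylindricPartition

namespace CylindricPartition

variable {k : ℕ} [NeZero k] {c : Fin k → ℕ}

theorem finsum_shift (f : ℕ → ℕ) (a : ℕ) {N : ℕ} (hf : ∀ j, N ≤ j → f j = 0) :
    ∑ᶠ j, (if j = 0 then a else f (j - 1)) = a + ∑ᶠ j, f j := by
  rw [finsum_eq_range_sum f hf (le_refl N),
    finsum_eq_range_sum (fun j => if j = 0 then a else f (j - 1))
      (N := N + 1) (fun j hj => by
        show (if j = 0 then a else f (j - 1)) = 0
        rw [if_neg (by omega)]; exact hf _ (by omega)) (le_refl _)]
  rw [Finset.sum_range_succ']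
  simp only [Nat.succ_ne_zero, if_false, if_true, Nat.add_sub_cancel, Nat.succ_sub_one,
    reduceIte]
  omega

/-- Prepend a part `a` to the components in `J`, turning a cylindric partition of
profile `c(J)` into one of profile `c`. -/
def ins (J : Finset (Fin k)) (a : ℕ) (hJ : ∀ i ∈ J, 0 < c i)
    (Λ : CylindricPartition k (profileMod k c J)) (hmax : ∀ i, Λ.part i 0 ≤ a) :
    CylindricPartition k c where
  part i j := if i ∈ J then (if j = 0 then a else Λ.part i (j - 1)) else Λ.part i j
  antitone i := by
    apply antitone_nat_of_succ_le
    intro j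
    by_cases hi : i ∈ J
    · simp only [hi, if_true, if_neg (Nat.succ_ne_zero j), Nat.add_sub_cancel]
      cases j with
      | zero => exact (if_pos rfl).symm ▸ (hmax i)
      | succ j =>
        rw [if_neg (Nat.succ_ne_zero j), Nat.add_sub_cancel]
        exact Λ.antitone i (Nat.le_succ j)
    · simp only [hi, if_false]
      exact Λ.antitone i (Nat.le_succ j)
  finite_support i := by
    obtain ⟨N, hN⟩ := Λ.finite_support i
    refine ⟨N + 1, fun j hj => ?_⟩
    by_cases hi : i ∈ J
    · simp only [hi, if_true]
      rw [if_neg (by omega)]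
      exact hN _ (by omega)
    · simp only [hi, if_false]
      exact hN _ (by omega)
  cyl i j := by
    have hsub : (i + 1 : Fin k) - 1 = i := add_sub_cancel_right i 1
    have hΛ := Λ.cyl i
    have hle : ∀ m, Λ.part (i + 1) m ≤ a := fun m =>
      le_trans (Λ.antitone _ (Nat.zero_le m)) (hmax _)
    by_cases hp : (i + 1 : Fin k) ∈ J <;> by_cases hi : i ∈ J
    · -- both in J
      have hprof : profileMod k c J (i + 1) = c (i + 1) := by
        simp [profileMod, hsub, hp, hi]
      simp only [hp, hi, if_true]
      cases j with
      | zero =>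
        rw [if_pos rfl]
        split <;> [exact le_refl a; exact hle _]
      | succ j =>
        rw [if_neg (Nat.succ_ne_zero j), Nat.add_sub_cancel,
          if_neg (by omega)]
        have h2 := hΛ j
        rw [hprof] at h2
        have : j + 1 + c (i + 1) - 1 = j + c (i + 1) := by omega
        rw [this]
        exact h2
    · -- i+1 ∈ J, i ∉ J
      have hd : 0 < c (i + 1) := hJ _ hp
      have hprof : profileMod k c J (i + 1) = c (i + 1) - 1 := by
        simp [profileMod, hsub, hp, hi]
      simp only [hp, hi, if_true, if_false]
      rw [if_neg (by omega)]
      have h2 := hΛ j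
      rw [hprof] at h2
      have : j + c (i + 1) - 1 = j + (c (i + 1) - 1) := by omega
      rw [this]
      exact h2
    · -- i+1 ∉ J, i ∈ J
      have hprof : profileMod k c J (i + 1) = c (i + 1) + 1 := by
        simp [profileMod, hsub, hp, hi]
      simp only [hp, hi, if_true, if_false]
      cases j with
      | zero => rw [if_pos rfl]; exact hle _
      | succ j =>
        rw [if_neg (Nat.succ_ne_zero j), Nat.add_sub_cancel]
        have h2 := hΛ j
        rw [hprof] at h2
        have : j + 1 + c (i + 1) = j + (c (i + 1) + 1) := by omega
        rw [this]
        exact h2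
    · -- neither
      have hprof : profileMod k c J (i + 1) = c (i + 1) := by
        simp [profileMod, hsub, hp, hi]
      simp only [hp, hi, if_false]
      have h2 := hΛ j
      rw [hprof] at h2
      exact h2

/-- Remove the first part of the components in `J`, turning a cylindric partition of
profile `c` into one of profile `c(J)`. -/
def rem (J : Finset (Fin k)) (hJ : ∀ i ∈ J, 0 < c i) (Λ : CylindricPartition k c) :
    CylindricPartition k (profileMod k c J) where
  part i j := if i ∈ J then Λ.part i (j + 1) else Λ.part i j
  antitone i := by
    apply antitone_nat_of_succ_le
    intro j
    by_cases hi : i ∈ J <;> simp only [hi, if_true, if_false]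
    · exact Λ.antitone i (by omega)
    · exact Λ.antitone i (Nat.le_succ j)
  finite_support i := by
    obtain ⟨N, hN⟩ := Λ.finite_support i
    refine ⟨N, fun j hj => ?_⟩
    by_cases hi : i ∈ J <;> simp only [hi, if_true, if_false]
    · exact hN _ (by omega)
    · exact hN _ hj
  cyl i j := by
    have hsub : (i + 1 : Fin k) - 1 = i := add_sub_cancel_right i 1
    have hΛ := Λ.cyl i
    by_cases hp : (i + 1 : Fin k) ∈ J <;> by_cases hi : i ∈ J
    · have hprof : profileMod k c J (i + 1) = c (i + 1) := by
        simp [profileMod, hsub, hp, hi]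
      simp only [hp, hi, if_true, hprof]
      have : j + c (i + 1) + 1 = j + 1 + c (i + 1) := by omega
      rw [this]
      exact hΛ (j + 1)
    · have hd : 0 < c (i + 1) := hJ _ hp
      have hprof : profileMod k c J (i + 1) = c (i + 1) - 1 := by
        simp [profileMod, hsub, hp, hi]
      simp only [hp, hi, if_true, if_false, hprof]
      have : j + (c (i + 1) - 1) + 1 = j + c (i + 1) := by omega
      rw [this]
      exact hΛ j
    · have hprof : profileMod k c J (i + 1) = c (i + 1) + 1 := by
        simp [profileMod, hsub, hp, hi]
      simp only [hp, hi, if_true, if_false, hprof]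
      have : j + (c (i + 1) + 1) = j + 1 + c (i + 1) := by omega
      rw [this]
      exact hΛ (j + 1)
    · have hprof : profileMod k c J (i + 1) = c (i + 1) := by
        simp [profileMod, hsub, hp, hi]
      simp only [hp, hi, if_false, hprof]
      exact hΛ j

theorem size_ins (J : Finset (Fin k)) (a : ℕ) (hJ : ∀ i ∈ J, 0 < c i)
    (Λ : CylindricPartition k (profileMod k c J)) (hmax : ∀ i, Λ.part i 0 ≤ a) :
    (ins J a hJ Λ hmax).size = J.card * a + Λ.size := by
  obtain ⟨N, hN⟩ := Λ.exists_bound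
  rw [size, size, finsum_eq_sum_of_fintype, finsum_eq_sum_of_fintype]
  have hpt : ∀ i, (∑ᶠ j, (ins J a hJ Λ hmax).part i j)
      = (if i ∈ J then a else 0) + ∑ᶠ j, Λ.part i j := by
    intro i
    by_cases hi : i ∈ J
    · rw [if_pos hi]
      rw [show (fun j => (ins J a hJ Λ hmax).part i j)
          = fun j => if j = 0 then a else Λ.part i (j - 1) by
        funext j; simp [ins, hi]]
      exact finsum_shift (Λ.part i) a (hN i)
    · rw [if_neg hi, zero_add]
      apply finsum_congr
      intro j
      simp [ins, hi]
  rw [Finset.sum_congr rfl fun i _ => hpt i, Finset.sum_add_distrib]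
  congr 1
  rw [Finset.sum_ite_mem, Finset.univ_inter, Finset.sum_const, smul_eq_mul, mul_comm]

theorem rem_ins (J : Finset (Fin k)) (a : ℕ) (hJ : ∀ i ∈ J, 0 < c i)
    (Λ : CylindricPartition k (profileMod k c J)) (hmax : ∀ i, Λ.part i 0 ≤ a) :
    rem J hJ (ins J a hJ Λ hmax) = Λ := by
  apply ext'
  funext i j
  by_cases hi : i ∈ J
  · simp [rem, ins, hi]
  · simp [rem, ins, hi]

theorem rem_first_le (J : Finset (Fin k)) (hJ : ∀ i ∈ J, 0 < c i)
    (Λ : CylindricPartition k c) (a : ℕ) (hmax : ∀ i, Λ.part i 0 ≤ a) :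
    ∀ i, (rem J hJ Λ).part i 0 ≤ a := by
  intro i
  by_cases hi : i ∈ J <;> simp only [rem, hi, if_true, if_false]
  · exact le_trans (Λ.antitone i (by omega)) (hmax i)
  · exact hmax i

theorem ins_rem (J : Finset (Fin k)) (a : ℕ) (hJ : ∀ i ∈ J, 0 < c i)
    (Λ : CylindricPartition k c) (hfirst : ∀ i ∈ J, Λ.part i 0 = a)
    (hmax' : ∀ i, (rem J hJ Λ).part i 0 ≤ a) :
    ins J a hJ (rem J hJ Λ) hmax' = Λ := by
  apply ext'
  funext i j
  by_cases hi : i ∈ J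
  · cases j with
    | zero => simp [ins, rem, hi, (hfirst i hi).symm]
    | succ j => simp [ins, rem, hi]
  · simp [ins, rem, hi]

/-- The key bijection: cylindric partitions of profile `c(J)` with all first parts
`≤ a` correspond to cylindric partitions of profile `c` with all first parts `≤ a`
whose components in `J` have first part exactly `a`. -/
def insEquiv (J : Finset (Fin k)) (hJ : ∀ i ∈ J, 0 < c i) (a n : ℕ) :
    {Λ' : CylindricPartition k (profileMod k c J) //
        (∀ i, Λ'.part i 0 ≤ a) ∧ J.card * a + Λ'.size = n}
    ≃ {Λ : CylindricPartition k c //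
        (∀ i, Λ.part i 0 ≤ a) ∧ Λ.size = n ∧ ∀ i ∈ J, Λ.part i 0 = a} where
  toFun p := ⟨ins J a hJ p.1 p.2.1, by
    refine ⟨fun i => ?_, ?_, fun i hi => ?_⟩
    · by_cases hi : i ∈ J <;> simp [ins, hi]
      exact p.2.1 i
    · rw [size_ins]; exact p.2.2
    · simp [ins, hi]⟩
  invFun p := ⟨rem J hJ p.1, by
    have hmax' : ∀ i, (rem J hJ p.1).part i 0 ≤ a := rem_first_le J hJ p.1 a p.2.1
    refine ⟨hmax', ?_⟩
    have := size_ins J a hJ (rem J hJ p.1) hmax'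
    rw [ins_rem J a hJ p.1 p.2.2.2 hmax'] at this
    rw [← this, p.2.2.1]⟩
  left_inv p := Subtype.ext (rem_ins J a hJ p.1 p.2.1)
  right_inv p := by
    apply Subtype.ext
    exact ins_rem J a hJ p.1 p.2.2.2 (rem_first_le J hJ p.1 a p.2.1)

open Fin.NatCast in
/-- Reachability: if the maximum is attained, it is attained at a component with
positive profile entry. -/
theorem exists_pos_first (Λ : CylindricPartition k c) (hc : 0 < ∑ i, c i)
    {a : ℕ} (hmax : ∀ i, Λ.part i 0 ≤ a) (hex : ∃ i, Λ.part i 0 = a) :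
    ∃ i, 0 < c i ∧ Λ.part i 0 = a := by
  by_contra hcon
  push_neg at hcon
  obtain ⟨i₀, hi₀⟩ := hex
  have key : ∀ m : ℕ, Λ.part (i₀ - (m : Fin k)) 0 = a := by
    intro m
    induction m with
    | zero => simpa using hi₀
    | succ m ih =>
      have hc0 : c (i₀ - (m : Fin k)) = 0 := by
        by_contra h
        exact absurd ih (hcon _ (Nat.pos_of_ne_zero h))
      have hcyl := Λ.cyl (i₀ - (m : Fin k) - 1) 0
      rw [sub_add_cancel] at hcyl
      rw [hc0] at hcyl
      simp only [add_zero] at hcyl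
      have h2 : Λ.part (i₀ - (m : Fin k) - 1) 0 = a := by
        have := hmax (i₀ - (m : Fin k) - 1)
        omega
      have hcast : ((m + 1 : ℕ) : Fin k) = (m : Fin k) + 1 := by push_cast; ring
      rw [hcast, sub_add_eq_sub_sub]
      exact h2
  have hex1 : ∃ i, c i ≠ 0 := by
    by_contra h
    push_neg at h
    simp [h] at hc
  obtain ⟨i₁, hi₁⟩ := hex1
  have := key ((i₀ - i₁ : Fin k)).val
  rw [Fin.cast_val_eq_self, sub_sub_cancel] at this
  exact absurd this (hcon i₁ (Nat.pos_of_ne_zero hi₁))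

end CylindricPartition

section Series

open CylindricPartition

/-- Split a `ℕ`-indexed fiber into the `0` part and the shifted part. -/
def CW.splitEquiv {P : Type*} (g : P × ℕ → (Fin 2 →₀ ℕ)) (e : Fin 2 →₀ ℕ) :
    {p : P × ℕ // g p = e} ≃
      {Λ : P // g (Λ, 0) = e} ⊕ {p : P × ℕ // g (p.1, p.2 + 1) = e} where
  toFun p := match p with
    | ⟨(Λ, 0), h⟩ => Sum.inl ⟨Λ, h⟩
    | ⟨(Λ, b + 1), h⟩ => Sum.inr ⟨(Λ, b), h⟩
  invFun x := match x with
    | Sum.inl ⟨Λ, h⟩ => ⟨(Λ, 0), h⟩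
    | Sum.inr ⟨(Λ, b), h⟩ => ⟨(Λ, b + 1), h⟩
  left_inv p := by rcases p with ⟨⟨Λ, _ | b⟩, h⟩ <;> rfl
  right_inv x := by rcases x with ⟨Λ, h⟩ | ⟨⟨Λ, b⟩, h⟩ <;> rfl

variable {k : ℕ} [NeZero k]

theorem CW.finT (c' : Fin k → ℕ) (m : ℕ) (e : Fin 2 →₀ ℕ) :
    {Λ : CylindricPartition k c' |
      CW.mkExp Λ.max (m * Λ.max + Λ.size) = e}.Finite := by
  apply (finite_size_le (k := k) (c := c') (e 1)).subset
  intro Λ h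
  rw [Set.mem_setOf_eq, CW.mkExp_eq_iff] at h
  simp only [Set.mem_setOf_eq]
  omega

theorem CW.finD (c' : Fin k → ℕ) (m : ℕ) (e : Fin 2 →₀ ℕ) :
    {p : CylindricPartition k c' × ℕ |
      CW.mkExp (p.1.max + p.2) (m * (p.1.max + p.2) + p.1.size) = e}.Finite := by
  apply Set.Finite.subset
    (Set.Finite.prod (finite_size_le (k := k) (c := c') (e 1)) (Set.finite_Iic (e 0)))
  intro p h
  rw [Set.mem_setOf_eq, CW.mkExp_eq_iff] at h
  constructor
  · simp only [Set.mem_setOf_eq]; omega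
  · simp only [Set.mem_Iic]; omega

theorem CW.finDshift (c' : Fin k → ℕ) (m : ℕ) (e : Fin 2 →₀ ℕ) :
    {p : CylindricPartition k c' × ℕ |
      CW.mkExp (p.1.max + (p.2 + 1)) (m * (p.1.max + (p.2 + 1)) + p.1.size) = e}.Finite := by
  apply Set.Finite.subset
    (Set.Finite.prod (finite_size_le (k := k) (c := c') (e 1)) (Set.finite_Iic (e 0)))
  intro p h
  rw [Set.mem_setOf_eq, CW.mkExp_eq_iff] at h
  constructor
  · simp only [Set.mem_setOf_eq]; omega
  · simp only [Set.mem_Iic]; omega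

theorem CW.cylGF_eq' (c' : Fin k → ℕ) (m : ℕ) :
    cylGF₂ k c' (X 0 * X 1 ^ m) (X 1) =
      ∑' Λ : CylindricPartition k c',
        (monomial (CW.mkExp Λ.max (m * Λ.max + Λ.size)) 1 : MvPowerSeries (Fin 2) ℚ) :=
  tsum_congr fun Λ => CW.X_mul_pow_eq m Λ.max Λ.size

theorem CW.cylGF_eq (c : Fin k → ℕ) :
    cylGF₂ k c (X 0) (X 1) =
      ∑' Λ : CylindricPartition k c,
        (monomial (CW.mkExp Λ.max Λ.size) 1 : MvPowerSeries (Fin 2) ℚ) :=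
  tsum_congr fun Λ => CW.X_pow_mul_pow Λ.max Λ.size

theorem CW.coeff_cylGF (c : Fin k → ℕ) (e : Fin 2 →₀ ℕ) :
    coeff e (cylGF₂ k c (X 0) (X 1))
      = Nat.card {Λ : CylindricPartition k c // CW.mkExp Λ.max Λ.size = e} := by
  rw [CW.cylGF_eq]
  exact CW.coeff_tsum_monomial _ (fun e' => by
    apply (finite_size_le (k := k) (c := c) (e' 1)).subset
    intro Λ h
    rw [Set.mem_setOf_eq, CW.mkExp_eq_iff] at h
    simp only [Set.mem_setOf_eq]
    omega) e

/-- Exponent map for the `D`-series. -/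
def CW.ED (c' : Fin k → ℕ) (m : ℕ) (p : CylindricPartition k c' × ℕ) : Fin 2 →₀ ℕ :=
  CW.mkExp (p.1.max + p.2) (m * (p.1.max + p.2) + p.1.size)

theorem CW.ED_shift (c' : Fin k → ℕ) (m : ℕ) (p : CylindricPartition k c' × ℕ) :
    CW.ED c' m (p.1, p.2 + 1) = CW.ED c' m p + CW.mkExp 1 m := by
  rw [CW.ED, CW.ED, CW.mkExp_add]
  congr 1 <;> ring

/-- The key series identity: `F_{c'}(yq^m, q) / (1 - yq^m)` is the generating
function over pairs `(Λ, b)`. -/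
theorem CW.key_series (c' : Fin k → ℕ) (m : ℕ) :
    cylGF₂ k c' (X 0 * X 1 ^ m) (X 1) * (1 - X 0 * X 1 ^ m)⁻¹
      = ∑' p : CylindricPartition k c' × ℕ,
          (monomial (CW.mkExp (p.1.max + p.2) (m * (p.1.max + p.2) + p.1.size)) 1 :
            MvPowerSeries (Fin 2) ℚ) := by
  have hu : (X 0 * X 1 ^ m : MvPowerSeries (Fin 2) ℚ)
      = monomial (CW.mkExp 1 m) 1 := by
    have := CW.X_mul_pow_eq m 1 0
    rw [pow_one, pow_zero, mul_one] at this
    rw [this, mul_one, add_zero]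
  have hshift := CW.ED_shift c' m
  have hEDfin : ∀ e, {p : CylindricPartition k c' × ℕ | CW.ED c' m p = e}.Finite :=
    CW.finD c' m
  -- main step : D * (1 - u) = T
  have hmain : (∑' p : CylindricPartition k c' × ℕ,
        (monomial (CW.ED c' m p) 1 : MvPowerSeries (Fin 2) ℚ)) * (1 - X 0 * X 1 ^ m)
      = cylGF₂ k c' (X 0 * X 1 ^ m) (X 1) := by
    rw [mul_one_sub, CW.cylGF_eq']
    apply MvPowerSeries.ext
    intro e
    rw [map_sub, CW.coeff_tsum_monomial _ hEDfin,
      CW.coeff_tsum_monomial _ (CW.finT c' m)]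
    have hDu : coeff e ((∑' p : CylindricPartition k c' × ℕ,
          (monomial (CW.ED c' m p) 1 : MvPowerSeries (Fin 2) ℚ)) * (X 0 * X 1 ^ m))
        = (Nat.card {p : CylindricPartition k c' × ℕ //
            CW.ED c' m (p.1, p.2 + 1) = e} : ℚ) := by
      rw [hu, coeff_mul_monomial]
      by_cases hle : CW.mkExp 1 m ≤ e
      · rw [if_pos hle, mul_one, CW.coeff_tsum_monomial _ hEDfin]
        congr 1
        apply Nat.card_congr
        apply Equiv.subtypeEquivRight
        intro p
        rw [hshift p, eq_tsub_iff_add_eq_of_le hle]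
      · rw [if_neg hle]
        have : IsEmpty {p : CylindricPartition k c' × ℕ //
            CW.ED c' m (p.1, p.2 + 1) = e} := by
          constructor
          rintro ⟨p, hp⟩
          apply hle
          rw [← hp, hshift p]
          exact le_add_self
        rw [Nat.card_of_isEmpty]
        simp
    rw [hDu]
    -- card identity
    have hcard : Nat.card {p : CylindricPartition k c' × ℕ // CW.ED c' m p = e}
        = Nat.card {Λ : CylindricPartition k c' //
            CW.mkExp Λ.max (m * Λ.max + Λ.size) = e}
          + Nat.card {p : CylindricPartition k c' × ℕ //
              CW.ED c' m (p.1, p.2 + 1) = e} := by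
      rw [Nat.card_congr (CW.splitEquiv (CW.ED c' m) e)]
      haveI : Finite {Λ : CylindricPartition k c' // CW.ED c' m (Λ, 0) = e} := by
        have : {Λ : CylindricPartition k c' | CW.ED c' m (Λ, 0) = e}.Finite := by
          apply (finite_size_le (k := k) (c := c') (e 1)).subset
          intro Λ h
          simp only [Set.mem_setOf_eq, CW.ED, CW.mkExp_eq_iff] at h
          simp only [Set.mem_setOf_eq]
          omega
        exact this.to_subtype
      haveI : Finite {p : CylindricPartition k c' × ℕ //
          CW.ED c' m (p.1, p.2 + 1) = e} :=
        Set.Finite.to_subtype (CW.finDshift c' m e)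
      rw [Nat.card_sum]
      congr 1
    rw [hcard]
    push_cast
    ring
  have hsame : (∑' p : CylindricPartition k c' × ℕ,
      (monomial (CW.mkExp (p.1.max + p.2) (m * (p.1.max + p.2) + p.1.size)) 1 :
        MvPowerSeries (Fin 2) ℚ))
      = ∑' p : CylindricPartition k c' × ℕ,
        (monomial (CW.ED c' m p) 1 : MvPowerSeries (Fin 2) ℚ) := rfl
  rw [hsame, ← hmain, mul_assoc, MvPowerSeries.mul_inv_cancel, mul_one]
  rw [hu, ← coeff_zero_eq_constantCoeff, map_sub, coeff_zero_one, coeff_monomial,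
    if_neg (Ne.symm (CW.mkExp_ne_zero m))]
  norm_num

theorem CW.coeff_key (c' : Fin k → ℕ) (m : ℕ) (e : Fin 2 →₀ ℕ) :
    coeff (R := ℚ) e (cylGF₂ k c' (X 0 * X 1 ^ m) (X 1) * (1 - X 0 * X 1 ^ m)⁻¹)
      = Nat.card {p : CylindricPartition k c' × ℕ //
          CW.mkExp (p.1.max + p.2) (m * (p.1.max + p.2) + p.1.size) = e} := by
  rw [CW.key_series]
  exact CW.coeff_tsum_monomial _ (CW.finD c' m) e

end Series

section Count

open CylindricPartition

theorem CW.ie_sum {α : Type*} [DecidableEq α] (S : Finset α) :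
    ∑ J ∈ S.powerset.erase ∅, ((-1 : ℚ)) ^ (J.card - 1)
      = if S.Nonempty then 1 else 0 := by
  have h0 : ∑ J ∈ S.powerset, ((-1 : ℚ)) ^ J.card = if S = ∅ then 1 else 0 := by
    have h := Finset.sum_powerset_neg_one_pow_card (x := S)
    have h2 : ((∑ J ∈ S.powerset, ((-1 : ℤ)) ^ J.card : ℤ) : ℚ)
        = ∑ J ∈ S.powerset, ((-1 : ℚ)) ^ J.card := by push_cast; rfl
    rw [← h2, h]
    split_ifs <;> simp
  have h2 := Finset.sum_erase_add S.powerset (fun J => ((-1 : ℚ)) ^ J.card)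
    (Finset.empty_mem_powerset S)
  have h3 : ∑ J ∈ S.powerset.erase ∅, ((-1 : ℚ)) ^ (J.card - 1)
      = - ∑ J ∈ S.powerset.erase ∅, ((-1 : ℚ)) ^ J.card := by
    rw [← Finset.sum_neg_distrib]
    apply Finset.sum_congr rfl
    intro J hJ
    have hne : J ≠ ∅ := (Finset.mem_erase.mp hJ).1
    have hcard : J.card ≠ 0 := by simpa [Finset.card_eq_zero] using hne
    have h4 : ((-1 : ℚ)) ^ J.card = ((-1 : ℚ)) ^ (J.card - 1) * (-1) := by
      rw [← pow_succ]
      congr 1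
      omega
    rw [h4]
    ring
  rw [h3]
  simp only [Finset.card_empty, pow_zero] at h2
  rw [h0] at h2
  by_cases hS : S = ∅
  · rw [if_neg (by simp [hS])]
    rw [if_pos hS] at h2
    linarith
  · rw [if_pos (Finset.nonempty_iff_ne_empty.mpr hS)]
    rw [if_neg hS] at h2
    linarith

theorem CW.count_main (k : ℕ) [NeZero k] (c : Fin k → ℕ) (hc : 0 < ∑ i, c i) (a n : ℕ) :
    (Nat.card {Λ : CylindricPartition k c // Λ.max = a ∧ Λ.size = n} : ℚ)
      = ∑ J ∈ ((Finset.univ.filter fun i : Fin k => 0 < c i).powerset.erase ∅),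
          (-1 : ℚ) ^ (J.card - 1) *
            (Nat.card {Λ : CylindricPartition k c //
              (∀ i, Λ.part i 0 ≤ a) ∧ Λ.size = n ∧ ∀ i ∈ J, Λ.part i 0 = a} : ℚ) := by
  classical
  have hfin : {Λ : CylindricPartition k c | (∀ i, Λ.part i 0 ≤ a) ∧ Λ.size = n}.Finite :=
    (finite_size_le n).subset fun Λ h => le_of_eq h.2
  set U := hfin.toFinset with hUdef
  have hmemU : ∀ Λ, Λ ∈ U ↔ (∀ i, Λ.part i 0 ≤ a) ∧ Λ.size = n := fun Λ =>
    hfin.mem_toFinset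
  have hL : (Nat.card {Λ : CylindricPartition k c // Λ.max = a ∧ Λ.size = n} : ℚ)
      = ((U.filter fun Λ => Λ.max = a).card : ℚ) := by
    congr 1
    have hfin' : {Λ : CylindricPartition k c | Λ.max = a ∧ Λ.size = n}.Finite :=
      hfin.subset fun Λ h => ⟨fun i => h.1 ▸ Λ.part_le_max i, h.2⟩
    rw [show Nat.card {Λ : CylindricPartition k c // Λ.max = a ∧ Λ.size = n}
      = hfin'.toFinset.card from Nat.card_eq_card_finite_toFinset hfin']
    congr 1
    ext Λ
    simp only [Set.Finite.mem_toFinset, Set.mem_setOf_eq, Finset.mem_filter, hmemU]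
    constructor
    · rintro ⟨h1, h2⟩
      exact ⟨⟨fun i => h1 ▸ Λ.part_le_max i, h2⟩, h1⟩
    · rintro ⟨⟨h1, h2⟩, h3⟩
      exact ⟨h3, h2⟩
  have hS2 : ∀ J : Finset (Fin k),
      (Nat.card {Λ : CylindricPartition k c //
        (∀ i, Λ.part i 0 ≤ a) ∧ Λ.size = n ∧ ∀ i ∈ J, Λ.part i 0 = a} : ℚ)
      = ((U.filter fun Λ => ∀ i ∈ J, Λ.part i 0 = a).card : ℚ) := by
    intro J
    congr 1
    have hfin' : {Λ : CylindricPartition k c |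
        (∀ i, Λ.part i 0 ≤ a) ∧ Λ.size = n ∧ ∀ i ∈ J, Λ.part i 0 = a}.Finite :=
      hfin.subset fun Λ h => ⟨h.1, h.2.1⟩
    rw [show Nat.card {Λ : CylindricPartition k c //
        (∀ i, Λ.part i 0 ≤ a) ∧ Λ.size = n ∧ ∀ i ∈ J, Λ.part i 0 = a}
      = hfin'.toFinset.card from Nat.card_eq_card_finite_toFinset hfin']
    congr 1
    ext Λ
    simp only [Set.Finite.mem_toFinset, Set.mem_setOf_eq, Finset.mem_filter, hmemU]
    tauto
  rw [hL, Finset.sum_congr rfl fun J _ => by rw [hS2 J]]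
  have expand : ∀ J : Finset (Fin k),
      ((U.filter fun Λ => ∀ i ∈ J, Λ.part i 0 = a).card : ℚ)
      = ∑ Λ ∈ U, (if ∀ i ∈ J, Λ.part i 0 = a then (1 : ℚ) else 0) := by
    intro J
    rw [Finset.card_filter, Nat.cast_sum]
    exact Finset.sum_congr rfl fun Λ _ => by split_ifs <;> simp
  rw [Finset.sum_congr rfl fun J _ => by rw [expand J]]
  have step1 : ∑ J ∈ ((Finset.univ.filter fun i : Fin k => 0 < c i).powerset.erase ∅),
        (-1 : ℚ) ^ (J.card - 1) * ∑ Λ ∈ U, (if ∀ i ∈ J, Λ.part i 0 = a then (1 : ℚ) else 0)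
      = ∑ Λ ∈ U, ∑ J ∈ ((Finset.univ.filter fun i : Fin k => 0 < c i).powerset.erase ∅),
          (if ∀ i ∈ J, Λ.part i 0 = a then (-1 : ℚ) ^ (J.card - 1) else 0) := by
    simp_rw [Finset.mul_sum, mul_ite, mul_one, mul_zero]
    exact Finset.sum_comm
  rw [step1]
  have inner : ∀ Λ ∈ U,
      ∑ J ∈ ((Finset.univ.filter fun i : Fin k => 0 < c i).powerset.erase ∅),
        (if ∀ i ∈ J, Λ.part i 0 = a then (-1 : ℚ) ^ (J.card - 1) else 0)
      = if Λ.max = a then (1 : ℚ) else 0 := by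
    intro Λ hΛ
    have hU := (hmemU Λ).mp hΛ
    have hQ : ∀ J : Finset (Fin k), (∀ i ∈ J, Λ.part i 0 = a)
        ↔ J ⊆ Finset.univ.filter (fun i => Λ.part i 0 = a) := by
      intro J
      constructor
      · intro h i hi
        simp only [Finset.mem_filter, Finset.mem_univ, true_and]
        exact h i hi
      · intro h i hi
        simpa using h hi
    rw [Finset.sum_congr rfl (fun J _ => if_congr (hQ J) rfl rfl)]
    rw [← Finset.sum_filter]
    have hset : ((Finset.univ.filter fun i : Fin k => 0 < c i).powerset.erase ∅).filter
          (fun J => J ⊆ Finset.univ.filter (fun i => Λ.part i 0 = a))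
        = (((Finset.univ.filter fun i : Fin k => 0 < c i) ∩
            (Finset.univ.filter fun i => Λ.part i 0 = a)).powerset).erase ∅ := by
      ext J
      simp only [Finset.mem_filter, Finset.mem_erase, Finset.mem_powerset,
        Finset.subset_inter_iff]
      tauto
    rw [hset, CW.ie_sum]
    apply if_congr _ rfl rfl
    constructor
    · rintro ⟨i, hi⟩
      simp only [Finset.mem_inter, Finset.mem_filter, Finset.mem_univ, true_and] at hi
      exact le_antisymm (max_le_iff.mpr hU.1) (hi.2 ▸ Λ.part_le_max i)
    · intro hmaxa
      obtain ⟨i, hi⟩ := Λ.exists_part_eq_max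
      obtain ⟨i', hi'⟩ := Λ.exists_pos_first hc hU.1 ⟨i, by rw [hi, hmaxa]⟩
      refine ⟨i', ?_⟩
      simp only [Finset.mem_inter, Finset.mem_filter, Finset.mem_univ, true_and]
      exact hi'
  rw [Finset.sum_congr rfl inner, Finset.sum_boole]

end Count

theorem cylGF_functional_equation (k : ℕ) (hk : 2 ≤ k) (c : Fin k → ℕ)
    (hℓ : 0 < ∑ i, c i) :
    haveI : NeZero k := ⟨by omega⟩
    cylGF₂ k c (X 0) (X 1) =
      ∑ J ∈ ((Finset.univ.filter fun i : Fin k => 0 < c i).powerset.erase ∅),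
        (-1 : MvPowerSeries (Fin 2) ℚ) ^ (J.card - 1) *
          cylGF₂ k (profileMod k c J) (X 0 * X 1 ^ J.card) (X 1) *
          (1 - X 0 * X 1 ^ J.card)⁻¹ := by
  haveI : NeZero k := ⟨by omega⟩
  classical
  apply MvPowerSeries.ext
  intro e
  rw [CW.coeff_cylGF, map_sum]
  have hterm : ∀ J ∈ (Finset.univ.filter fun i : Fin k => 0 < c i).powerset.erase ∅,
      coeff e ((-1 : MvPowerSeries (Fin 2) ℚ) ^ (J.card - 1) *
          cylGF₂ k (profileMod k c J) (X 0 * X 1 ^ J.card) (X 1) *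
          (1 - X 0 * X 1 ^ J.card)⁻¹)
      = (-1 : ℚ) ^ (J.card - 1) *
          (Nat.card {p : CylindricPartition k (profileMod k c J) × ℕ //
            CW.mkExp (p.1.max + p.2) (J.card * (p.1.max + p.2) + p.1.size) = e} : ℚ) := by
    intro J _
    rw [mul_assoc]
    rw [show ((-1 : MvPowerSeries (Fin 2) ℚ)) ^ (J.card - 1)
        = C ((-1 : ℚ) ^ (J.card - 1)) by rw [map_pow, map_neg, map_one]]
    rw [coeff_C_mul, CW.coeff_key (profileMod k c J) J.card e]
  rw [Finset.sum_congr rfl hterm]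
  have hL2 : Nat.card {Λ : CylindricPartition k c // CW.mkExp Λ.max Λ.size = e}
      = Nat.card {Λ : CylindricPartition k c // Λ.max = e 0 ∧ Λ.size = e 1} :=
    Nat.card_congr (Equiv.subtypeEquivRight fun Λ => CW.mkExp_eq_iff _ _ e)
  rw [hL2]
  have hbij : ∀ J ∈ (Finset.univ.filter fun i : Fin k => 0 < c i).powerset.erase ∅,
      Nat.card {p : CylindricPartition k (profileMod k c J) × ℕ //
        CW.mkExp (p.1.max + p.2) (J.card * (p.1.max + p.2) + p.1.size) = e}
      = Nat.card {Λ : CylindricPartition k c //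
          (∀ i, Λ.part i 0 ≤ e 0) ∧ Λ.size = e 1 ∧ ∀ i ∈ J, Λ.part i 0 = e 0} := by
    intro J hJ
    have hJpos : ∀ i ∈ J, 0 < c i := by
      intro i hi
      have := Finset.mem_powerset.mp (Finset.mem_erase.mp hJ).2 hi
      simpa using this
    have e1 : {p : CylindricPartition k (profileMod k c J) × ℕ //
          CW.mkExp (p.1.max + p.2) (J.card * (p.1.max + p.2) + p.1.size) = e}
        ≃ {Λ' : CylindricPartition k (profileMod k c J) //
            (∀ i, Λ'.part i 0 ≤ e 0) ∧ J.card * e 0 + Λ'.size = e 1} := by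
      refine ⟨fun p => ⟨p.1.1, ?_⟩, fun q => ⟨(q.1, e 0 - q.1.max), ?_⟩, ?_, ?_⟩
      · obtain ⟨h1, h2⟩ := (CW.mkExp_eq_iff _ _ e).mp p.2
        refine ⟨fun i => ?_, ?_⟩
        · have := p.1.1.part_le_max i
          omega
        · rw [← h1]
          exact h2
      · have hm : q.1.max ≤ e 0 := CylindricPartition.max_le_iff.mpr q.2.1
        have hx : q.1.max + (e 0 - q.1.max) = e 0 := by omega
        rw [hx]
        exact (CW.mkExp_eq_iff _ _ e).mpr ⟨rfl, q.2.2⟩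
      · rintro ⟨⟨Λ', b⟩, hp⟩
        obtain ⟨h1, h2⟩ := (CW.mkExp_eq_iff _ _ e).mp hp
        apply Subtype.ext
        have hb : e 0 - (Λ', b).1.max = b := by
          simp only at h1 ⊢
          omega
        simp only
        rw [hb]
      · rintro ⟨Λ', hq⟩
        rfl
    rw [Nat.card_congr e1,
      Nat.card_congr (CylindricPartition.insEquiv J hJpos (e 0) (e 1))]
  rw [Finset.sum_congr rfl fun J hJ => by rw [hbij J hJ]]
  exact CW.count_main k c hℓ (e 0) (e 1)
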